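/- Let η, η̂ ∈ ℝ with η̂ ≠ η, and let z¹, z², ρ, ρ̂ : ℝ² → ℝ be smooth (C^∞) functions of (x,t) with ρ̂(x,t) ≠ ρ(x,t) for all (x,t), satisfying the coupled Schrödinger system z¹_t = 2 (z¹)² z² + z¹_xx and z²_t = −2 z¹ (z²)² − z²_xx, the Riccati system ρ_x = z² ρ² − 2η ρ + z¹, ρ_t = (−2η z² − z²_x) ρ² + (2 z¹ z² + 4η²) ρ − 2η z¹ + z¹_x, and the Riccati system ρ̂_x = z² ρ̂² − 2η̂ ρ̂ + z¹, ρ̂_t = (−2η̂ z² − z²_x) ρ̂² + (2 z¹ z² + 4η̂²) ρ̂ − 2η̂ z¹ + z¹_x. Define z¹' := ((2η − 2η̂) ρ ρ̂ + z¹ (ρ − ρ̂))/(ρ − ρ̂) and z²' := ((ρ − ρ̂) z² − 2η + 2η̂)/(ρ − ρ̂). Then the pair (z¹', z²') satisfies the coupled Schrödinger system: z¹'_t = 2 (z¹')² z²' + z¹'_xx and z²'_t = −2 z¹' (z²')² − z²'_xx. -/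

import Mathlib

/-- Partial derivative in the first variable `x`. -/
noncomputable def px (f : ℝ → ℝ → ℝ) : ℝ → ℝ → ℝ := fun x t => deriv (fun y => f y t) x

/-- Partial derivative in the second variable `t`. -/
noncomputable def pt (f : ℝ → ℝ → ℝ) : ℝ → ℝ → ℝ := fun x t => deriv (fun s => f x s) t

lemma px_eq (f : ℝ → ℝ → ℝ) {x t v : ℝ} (h : HasDerivAt (fun y => f y t) v x) :
    px f x t = v := h.deriv

lemma pt_eq (f : ℝ → ℝ → ℝ) {x t v : ℝ} (h : HasDerivAt (fun s => f x s) v t) :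
    pt f x t = v := h.deriv

lemma hx_atom (f : ℝ → ℝ → ℝ) (hf : ContDiff ℝ (⊤ : ℕ∞) (Function.uncurry f)) (x t : ℝ) :
    HasDerivAt (fun y => f y t) (px f x t) x := by
  have h : Differentiable ℝ (fun y : ℝ => Function.uncurry f (y, t)) :=
    (hf.differentiable (by simp)).comp (differentiable_id.prodMk (differentiable_const t))
  exact (h x).hasDerivAt

lemma ht_atom (f : ℝ → ℝ → ℝ) (hf : ContDiff ℝ (⊤ : ℕ∞) (Function.uncurry f)) (x t : ℝ) :
    HasDerivAt (fun s => f x s) (pt f x t) t := by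
  have h : Differentiable ℝ (fun s : ℝ => Function.uncurry f (x, s)) :=
    (hf.differentiable (by simp)).comp ((differentiable_const x).prodMk differentiable_id)
  exact (h t).hasDerivAt

lemma contDiff_px (f : ℝ → ℝ → ℝ) (hf : ContDiff ℝ (⊤ : ℕ∞) (Function.uncurry f)) :
    ContDiff ℝ (⊤ : ℕ∞) (Function.uncurry (px f)) := by
  have key : Function.uncurry (px f)
      = fun p : ℝ × ℝ => fderiv ℝ (Function.uncurry f) p (1, 0) := by
    funext p
    obtain ⟨x, t⟩ := p
    show px f x t = _
    have hF : HasFDerivAt (Function.uncurry f) (fderiv ℝ (Function.uncurry f) (x, t)) (x, t) :=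
      ((hf.differentiable (by simp)) (x, t)).hasFDerivAt
    have hline : HasDerivAt (fun y : ℝ => (y, t)) ((1 : ℝ), (0 : ℝ)) x :=
      (hasDerivAt_id x).prodMk (hasDerivAt_const x t)
    exact (hF.comp_hasDerivAt x hline).deriv
  rw [key]
  exact (hf.fderiv_right (mod_cast le_top)).clm_apply contDiff_const


/-- the auto-Bäcklund transformation of the coupled Schrödinger system
`z¹_t = 2(z¹)²z² + z¹_xx`, `z²_t = −2z¹(z²)² − z²_xx` obtained from the doubled
Riccati covering with parameters `η ≠ η̂`:
`z¹' = ((2η−2η̂)ρρ̂ + z¹(ρ−ρ̂))/(ρ−ρ̂)`, `z²' = ((ρ−ρ̂)z² − 2η + 2η̂)/(ρ−ρ̂)`. -/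
theorem coupled_schrodinger_auto_backlund (η ηh : ℝ) (hne : ηh ≠ η)
    (z₁ z₂ ρ ρh : ℝ → ℝ → ℝ)
    (hz₁ : ContDiff ℝ (⊤ : ℕ∞) (Function.uncurry z₁))
    (hz₂ : ContDiff ℝ (⊤ : ℕ∞) (Function.uncurry z₂))
    (hρ : ContDiff ℝ (⊤ : ℕ∞) (Function.uncurry ρ))
    (hρh : ContDiff ℝ (⊤ : ℕ∞) (Function.uncurry ρh))
    (hsep : ∀ x t, ρh x t ≠ ρ x t)
    (hz₁t : ∀ x t, pt z₁ x t = 2 * (z₁ x t) ^ 2 * z₂ x t + px (px z₁) x t)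
    (hz₂t : ∀ x t, pt z₂ x t = -2 * z₁ x t * (z₂ x t) ^ 2 - px (px z₂) x t)
    (hρx : ∀ x t, px ρ x t = z₂ x t * (ρ x t) ^ 2 - 2 * η * ρ x t + z₁ x t)
    (hρt : ∀ x t, pt ρ x t
      = (-2 * η * z₂ x t - px z₂ x t) * (ρ x t) ^ 2
        + (2 * z₁ x t * z₂ x t + 4 * η ^ 2) * ρ x t - 2 * η * z₁ x t + px z₁ x t)
    (hρhx : ∀ x t, px ρh x t = z₂ x t * (ρh x t) ^ 2 - 2 * ηh * ρh x t + z₁ x t)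
    (hρht : ∀ x t, pt ρh x t
      = (-2 * ηh * z₂ x t - px z₂ x t) * (ρh x t) ^ 2
        + (2 * z₁ x t * z₂ x t + 4 * ηh ^ 2) * ρh x t - 2 * ηh * z₁ x t + px z₁ x t) :
    ∀ x t,
      pt (fun x t =>
            ((2 * η - 2 * ηh) * ρ x t * ρh x t + z₁ x t * (ρ x t - ρh x t))
              / (ρ x t - ρh x t)) x t
        = 2 * (((2 * η - 2 * ηh) * ρ x t * ρh x t + z₁ x t * (ρ x t - ρh x t))
              / (ρ x t - ρh x t)) ^ 2
            * (((ρ x t - ρh x t) * z₂ x t - 2 * η + 2 * ηh) / (ρ x t - ρh x t))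
          + px (px (fun x t =>
              ((2 * η - 2 * ηh) * ρ x t * ρh x t + z₁ x t * (ρ x t - ρh x t))
                / (ρ x t - ρh x t))) x t
      ∧ pt (fun x t =>
            ((ρ x t - ρh x t) * z₂ x t - 2 * η + 2 * ηh) / (ρ x t - ρh x t)) x t
        = -2 * (((2 * η - 2 * ηh) * ρ x t * ρh x t + z₁ x t * (ρ x t - ρh x t))
              / (ρ x t - ρh x t))
            * (((ρ x t - ρh x t) * z₂ x t - 2 * η + 2 * ηh) / (ρ x t - ρh x t)) ^ 2
          - px (px (fun x t =>
              ((ρ x t - ρh x t) * z₂ x t - 2 * η + 2 * ηh) / (ρ x t - ρh x t))) x t := by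
  
  have hD : ∀ y s, ρ y s - ρh y s ≠ 0 := fun y s => sub_ne_zero.mpr fun h => hsep y s h.symm
  have Xr := hx_atom ρ hρ
  have Xrh := hx_atom ρh hρh
  have Xa := hx_atom z₁ hz₁
  have Xb := hx_atom z₂ hz₂
  have XP1 := hx_atom (px z₁) (contDiff_px z₁ hz₁)
  have XP2 := hx_atom (px z₂) (contDiff_px z₂ hz₂)
  have Tr := ht_atom ρ hρ
  have Trh := ht_atom ρh hρh
  have Ta := ht_atom z₁ hz₁
  have Tb := ht_atom z₂ hz₂
  have key1 : px (fun x t =>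
        ((2 * η - 2 * ηh) * ρ x t * ρh x t + z₁ x t * (ρ x t - ρh x t))
          / (ρ x t - ρh x t))
      = fun y s => px z₁ y s
          + (2 * η - 2 * ηh) * (2 * ρ y s * ρh y s * (η * ρh y s - ηh * ρ y s)
              + z₁ y s * (ρ y s + ρh y s) * (ρ y s - ρh y s)) / (ρ y s - ρh y s) ^ 2 := by
    funext y s
    have h := ((((Xr y s).const_mul (2 * η - 2 * ηh)).mul (Xrh y s)).add
        ((Xa y s).mul ((Xr y s).sub (Xrh y s)))).div ((Xr y s).sub (Xrh y s)) (hD y s)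
    refine (px_eq _ h).trans ?_
    rw [hρx y s, hρhx y s]
    have hd := hD y s
    simp only [Pi.sub_apply, Pi.mul_apply, Pi.add_apply]
    field_simp
    ring
  have key2 : px (fun x t =>
        ((ρ x t - ρh x t) * z₂ x t - 2 * η + 2 * ηh) / (ρ x t - ρh x t))
      = fun y s => px z₂ y s
          + (2 * η - 2 * ηh) * (2 * (ηh * ρh y s - η * ρ y s)
              + z₂ y s * (ρ y s + ρh y s) * (ρ y s - ρh y s)) / (ρ y s - ρh y s) ^ 2 := by
    funext y s
    have h := (((((Xr y s).sub (Xrh y s)).mul (Xb y s)).sub_const (2 * η)).add_const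
        (2 * ηh)).div ((Xr y s).sub (Xrh y s)) (hD y s)
    refine (px_eq _ h).trans ?_
    rw [hρx y s, hρhx y s]
    have hd := hD y s
    simp only [Pi.sub_apply, Pi.mul_apply, Pi.add_apply]
    field_simp
    ring
  intro x t
  have hd := hD x t
  constructor
  · rw [key1]
    have hI1 := ((((((Xr x t).const_mul 2).mul (Xrh x t)).mul
          (((Xrh x t).const_mul η).sub ((Xr x t).const_mul ηh))).add
        (((Xa x t).mul ((Xr x t).add (Xrh x t))).mul ((Xr x t).sub (Xrh x t)))).const_mul
          (2 * η - 2 * ηh)).div (((Xr x t).sub (Xrh x t)).pow 2) (pow_ne_zero 2 hd)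
    have hE1 := (XP1 x t).add hI1
    rw [px_eq (fun y s => px z₁ y s
          + (2 * η - 2 * ηh) * (2 * ρ y s * ρh y s * (η * ρh y s - ηh * ρ y s)
              + z₁ y s * (ρ y s + ρh y s) * (ρ y s - ρh y s)) / (ρ y s - ρh y s) ^ 2) hE1]
    have hT1 := ((((Tr x t).const_mul (2 * η - 2 * ηh)).mul (Trh x t)).add
        ((Ta x t).mul ((Tr x t).sub (Trh x t)))).div ((Tr x t).sub (Trh x t)) hd
    rw [pt_eq (fun x t =>
        ((2 * η - 2 * ηh) * ρ x t * ρh x t + z₁ x t * (ρ x t - ρh x t))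
          / (ρ x t - ρh x t)) hT1]
    simp only [Pi.sub_apply, Pi.mul_apply, Pi.add_apply, Pi.pow_apply]
    rw [hρt x t, hρht x t, hz₁t x t, hρx x t, hρhx x t]
    field_simp
    ring
  · rw [key2]
    have hI2 := ((((((Xrh x t).const_mul ηh).sub ((Xr x t).const_mul η)).const_mul 2).add
        (((Xb x t).mul ((Xr x t).add (Xrh x t))).mul ((Xr x t).sub (Xrh x t)))).const_mul
          (2 * η - 2 * ηh)).div (((Xr x t).sub (Xrh x t)).pow 2) (pow_ne_zero 2 hd)
    have hE2 := (XP2 x t).add hI2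
    rw [px_eq (fun y s => px z₂ y s
          + (2 * η - 2 * ηh) * (2 * (ηh * ρh y s - η * ρ y s)
              + z₂ y s * (ρ y s + ρh y s) * (ρ y s - ρh y s)) / (ρ y s - ρh y s) ^ 2) hE2]
    have hT2 := (((((Tr x t).sub (Trh x t)).mul (Tb x t)).sub_const (2 * η)).add_const
        (2 * ηh)).div ((Tr x t).sub (Trh x t)) hd
    rw [pt_eq (fun x t =>
        ((ρ x t - ρh x t) * z₂ x t - 2 * η + 2 * ηh) / (ρ x t - ρh x t)) hT2]
    simp only [Pi.sub_apply, Pi.mul_apply, Pi.add_apply, Pi.pow_apply]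
    rw [hρt x t, hρht x t, hz₂t x t, hρx x t, hρhx x t]
    field_simp
    ring
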